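/- (Theorem 3.1) Let X_1, …, X_n be i.i.d. with the NDOPPE PMF f. Then T = X_1 + ⋯ + X_n has PMF f_T(t) = h(θ)^n · A_n(t) · (1−θ)^t for t ∈ ℕ; equivalently, for every t ∈ ℕ, ∑_{(x_1,…,x_n) ∈ ℕ^n, x_1+⋯+x_n = t} ∏_{i=1}^n f(x_i) = h(θ)^n · A_n(t) · (1−θ)^t. -/

import Mathlib

open scoped BigOperators

/-- `p x = ∑_{k=1}^r a_{k-1} (k-1)! C(x+k-1, x)` (index shifted: `k ∈ range r` stands for `k-1`). -/
noncomputable def p (r : ℕ) (a : ℕ → ℝ) (x : ℕ) : ℝ :=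
  ∑ k ∈ Finset.range r, a k * (Nat.factorial k : ℝ) * (Nat.choose (x + k) x : ℝ)

/-- `h θ = 1 / ∑_{k=1}^r a_{k-1} (k-1)! / θ^k` (index shifted). -/
noncomputable def h (r : ℕ) (a : ℕ → ℝ) (θ : ℝ) : ℝ :=
  1 / ∑ k ∈ Finset.range r, a k * (Nat.factorial k : ℝ) / θ ^ (k + 1)

/-- `A n t = ∑_{y₁+⋯+y_r = n} (n!/(y₁!⋯y_r!)) (∏_{k=1}^r (a_{k-1}(k-1)!)^{y_k})
    C(t + ∑_{k=1}^r k y_k − 1, t)`. -/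
noncomputable def A (r : ℕ) (a : ℕ → ℝ) (n t : ℕ) : ℝ :=
  ∑ y ∈ Finset.Nat.antidiagonalTuple r n,
    ((Nat.factorial n : ℝ) / ∏ k : Fin r, (Nat.factorial (y k) : ℝ)) *
      (∏ k : Fin r, (a (k : ℕ) * (Nat.factorial (k : ℕ) : ℝ)) ^ (y k)) *
      (Nat.choose (t + (∑ k : Fin r, ((k : ℕ) + 1) * y k) - 1) t : ℝ)

section NdoppeAux
open Finset


lemma hockey (q t : ℕ) : ∑ b ∈ range (t+1), (b+q).choose b = (t+q+1).choose t := by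
  induction t with
  | zero => simp
  | succ t ih =>
      rw [Finset.sum_range_succ, ih, show t+1+q+1 = (t+q+1)+1 from by omega,
        Nat.choose_succ_succ (t+q+1) t, show t+1+q = t+q+1 from by omega]

lemma vand (q : ℕ) : ∀ p t : ℕ,
    ∑ ab ∈ Finset.HasAntidiagonal.antidiagonal t, (ab.1 + p).choose ab.1 * (ab.2 + q).choose ab.2
      = (t + p + q + 1).choose t := by
  intro p
  induction p with
  | zero =>
      intro t
      simp only [Nat.add_zero, Nat.choose_self, one_mul]
      rw [Finset.Nat.sum_antidiagonal_eq_sum_range_succ_mk, ← Finset.sum_range_reflect]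
      refine (Finset.sum_congr rfl fun b hb => ?_).trans (hockey q t)
      rw [Finset.mem_range] at hb
      have h2 : t - (t + 1 - 1 - b) = b := by omega
      rw [show t.succ - 1 - b = t + 1 - 1 - b from rfl, h2]
  | succ p ihp =>
      intro t
      induction t with
      | zero => simp
      | succ t iht =>
          rw [Finset.Nat.sum_antidiagonal_succ]
          have pascal : ∀ a : ℕ, (a + 1 + (p+1)).choose (a+1)
              = (a + (p+1)).choose a + (a + 1 + p).choose (a+1) := by
            intro a
            rw [show a + 1 + (p+1) = (a+p+1)+1 from by omega, Nat.choose_succ_succ,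
              show a + (p+1) = a + p + 1 from by omega, show a+1+p = a+p+1 from by omega]
          have expand : ∑ ab ∈ Finset.HasAntidiagonal.antidiagonal t,
              (ab.1 + 1 + (p+1)).choose (ab.1+1) * (ab.2 + q).choose ab.2
              = (∑ ab ∈ Finset.HasAntidiagonal.antidiagonal t, (ab.1 + (p+1)).choose ab.1 * (ab.2 + q).choose ab.2)
                + ∑ ab ∈ Finset.HasAntidiagonal.antidiagonal t, (ab.1 + 1 + p).choose (ab.1+1) * (ab.2 + q).choose ab.2 := by
            rw [← Finset.sum_add_distrib]
            apply Finset.sum_congr rfl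
            intro ab _
            rw [pascal ab.1, Nat.add_mul]
          rw [expand, iht]
          have hsplit := Finset.Nat.sum_antidiagonal_succ (n := t)
            (f := fun ab => (ab.1 + p).choose ab.1 * (ab.2 + q).choose ab.2)
          rw [ihp (t+1)] at hsplit
          simp only [Nat.choose_zero_right, one_mul, Nat.zero_add, Nat.succ_eq_add_one] at hsplit ⊢
          have F3 : (t+1+(p+1)+q+1).choose (t+1)
              = (t+(p+1)+q+1).choose t + (t+1+p+q+1).choose (t+1) := by
            rw [show t+1+(p+1)+q+1 = (t+(p+1)+q+1)+1 from by omega, Nat.choose_succ_succ]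
            simp only [Nat.succ_eq_add_one]
            have : (t+(p+1)+q+1).choose (t+1) = (t+1+p+q+1).choose (t+1) := by
              congr 1; omega
            omega
          omega

lemma vand' (p s t : ℕ) :
    ∑ ab ∈ Finset.HasAntidiagonal.antidiagonal t, (ab.1 + p).choose ab.1 * (ab.2 + s - 1).choose ab.2
      = (t + p + s).choose t := by
  cases s with
  | zero =>
      rw [Finset.sum_eq_single (t, 0)]
      · simp
      · intro ab hab hne
        rw [Finset.HasAntidiagonal.mem_antidiagonal] at hab
        have h2 : ab.2 ≠ 0 := by
          intro h; apply hne
          have : ab = (ab.1, ab.2) := rfl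
          rw [this, h] at hab ⊢
          simp at hab ⊢
          omega
        have : ab.2 + 0 - 1 < ab.2 := by omega
        rw [Nat.choose_eq_zero_of_lt this, Nat.mul_zero]
      · intro hmem
        exact absurd (Finset.HasAntidiagonal.mem_antidiagonal.mpr (by simp)) hmem
  | succ q =>
      have hc : ∀ ab ∈ Finset.HasAntidiagonal.antidiagonal t, (ab.1 + p).choose ab.1 * (ab.2 + (q+1) - 1).choose ab.2
          = (ab.1 + p).choose ab.1 * (ab.2 + q).choose ab.2 := by
        intro ab _
        have h : ab.2 + (q+1) - 1 = ab.2 + q := by omega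
        rw [h]
      rw [Finset.sum_congr rfl hc, vand q p t]
      congr 1


lemma sum_adT_succ {M : Type*} [AddCommMonoid M] (n t : ℕ) (f : (Fin (n+1) → ℕ) → M) :
    ∑ x ∈ Finset.Nat.antidiagonalTuple (n+1) t, f x
      = ∑ p ∈ Finset.HasAntidiagonal.antidiagonal t, ∑ x ∈ Finset.Nat.antidiagonalTuple n p.2, f (Fin.cons p.1 x) := by
  rw [Finset.sum_sigma' (Finset.HasAntidiagonal.antidiagonal t)
    (fun p => Finset.Nat.antidiagonalTuple n p.2) (fun p x => f (Fin.cons p.1 x))]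
  refine (Finset.sum_nbij'
    (i := fun x => (⟨(x 0, ∑ i : Fin n, x i.succ), Fin.tail x⟩ :
      Σ p : ℕ × ℕ, (Fin n → ℕ)))
    (j := fun q => Fin.cons q.1.1 q.2) ?_ ?_ ?_ ?_ ?_).symm.symm
  · intro x hx
    rw [Finset.Nat.mem_antidiagonalTuple, Fin.sum_univ_succ] at hx
    refine Finset.mem_sigma.mpr ⟨Finset.HasAntidiagonal.mem_antidiagonal.mpr hx, ?_⟩
    exact Finset.Nat.mem_antidiagonalTuple.mpr rfl
  · intro q hq
    rw [Finset.mem_sigma] at hq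
    obtain ⟨h1, h2⟩ := hq
    rw [Finset.HasAntidiagonal.mem_antidiagonal] at h1
    rw [Finset.Nat.mem_antidiagonalTuple] at h2
    rw [Finset.Nat.mem_antidiagonalTuple, Fin.sum_univ_succ]
    simp only [Fin.cons_zero, Fin.cons_succ]
    rw [h2, h1]
  · intro x _
    exact Fin.cons_self_tail x
  · intro q hq
    rw [Finset.mem_sigma] at hq
    obtain ⟨h1, h2⟩ := hq
    rw [Finset.Nat.mem_antidiagonalTuple] at h2
    refine Sigma.ext ?_ ?_
    · simp only [Fin.cons_zero, Fin.cons_succ]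
      rw [h2]
    · simp only [Fin.cons_zero, Fin.cons_succ]
      exact heq_of_eq (Fin.tail_cons _ _)
  · intro x _
    simp only [Fin.cons_zero]
    rw [Fin.cons_self_tail x]

lemma tupleV : ∀ (n : ℕ) (k : Fin n → ℕ) (t : ℕ),
    ∑ x ∈ Finset.Nat.antidiagonalTuple n t, ∏ i, (x i + k i).choose (x i)
      = (t + (∑ i, (k i + 1)) - 1).choose t := by
  intro n
  induction n with
  | zero =>
      intro k t
      cases t with
      | zero => simp
      | succ t =>
          rw [Finset.Nat.antidiagonalTuple_zero_succ]
          simp only [Finset.sum_empty, Finset.univ_eq_empty, Finset.sum_empty]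
          rw [eq_comm, Nat.choose_eq_zero_of_lt (by omega)]
  | succ n ih =>
      intro k t
      rw [sum_adT_succ n t (fun x => ∏ i, (x i + k i).choose (x i))]
      have step : ∀ p ∈ Finset.HasAntidiagonal.antidiagonal t,
          ∑ x ∈ Finset.Nat.antidiagonalTuple n p.2,
            ∏ i, ((Fin.cons p.1 x : Fin (n+1) → ℕ) i + k i).choose ((Fin.cons p.1 x : Fin (n+1) → ℕ) i)
          = (p.1 + k 0).choose p.1 * ((p.2 + (∑ i : Fin n, (k i.succ + 1)) - 1).choose p.2) := by
        intro p _
        have inner : ∀ x : Fin n → ℕ,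
            (∏ i, ((Fin.cons p.1 x : Fin (n+1) → ℕ) i + k i).choose ((Fin.cons p.1 x : Fin (n+1) → ℕ) i))
            = (p.1 + k 0).choose p.1 * ∏ i : Fin n, (x i + k i.succ).choose (x i) := by
          intro x
          rw [Fin.prod_univ_succ]
          simp [Fin.cons_zero, Fin.cons_succ]
        rw [Finset.sum_congr rfl (fun x _ => inner x), ← Finset.mul_sum,
          ih (fun i => k i.succ) p.2]
      rw [Finset.sum_congr rfl step, vand' (k 0) (∑ i : Fin n, (k i.succ + 1)) t]
      congr 1
      rw [Fin.sum_univ_succ]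
      omega


/-- increment coordinate `a` -/
def bump {r : ℕ} (a : Fin r) (y : Fin r → ℕ) : Fin r → ℕ := fun k => if k = a then y k + 1 else y k

def unbump {r : ℕ} (a : Fin r) (y : Fin r → ℕ) : Fin r → ℕ := fun k => if k = a then y k - 1 else y k

lemma sum_bump {r : ℕ} (a : Fin r) (y : Fin r → ℕ) :
    ∑ k, bump a y k = (∑ k, y k) + 1 := by
  unfold bump
  rw [Finset.sum_congr rfl (fun k _ => by
    rw [show (if k = a then y k + 1 else y k) = y k + (if k = a then 1 else 0) from by
      by_cases h : k = a <;> simp [h]]), Finset.sum_add_distrib, Finset.sum_ite_eq' univ a]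
  simp

lemma sum_unbump {r : ℕ} (a : Fin r) (y : Fin r → ℕ) (hya : y a ≠ 0) :
    (∑ k, unbump a y k) + 1 = ∑ k, y k := by
  have : y = bump a (unbump a y) := by
    funext k
    unfold bump unbump
    by_cases h : k = a <;> simp [h] <;> omega
  conv_rhs => rw [this]
  rw [sum_bump]

lemma MREC (r n : ℕ) (G : (Fin r → ℕ) → ℝ) :
    ∑ y ∈ piAntidiag (univ : Finset (Fin r)) (n+1),
        ((Nat.factorial (n+1) : ℝ) / ∏ k, (Nat.factorial (y k) : ℝ)) * G y
      = ∑ a : Fin r, ∑ y ∈ piAntidiag (univ : Finset (Fin r)) n,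
          ((Nat.factorial n : ℝ) / ∏ k, (Nat.factorial (y k) : ℝ)) * G (bump a y) := by
  have hstep : ∀ y ∈ piAntidiag (univ : Finset (Fin r)) (n+1),
      ((Nat.factorial (n+1) : ℝ) / ∏ k, (Nat.factorial (y k) : ℝ)) * G y
        = ∑ a : Fin r, ((y a : ℝ) * ((Nat.factorial n : ℝ) / ∏ k, (Nat.factorial (y k) : ℝ))) * G y := by
    intro y hy
    rw [Finset.mem_piAntidiag] at hy
    have hy1 : ∑ k, y k = n + 1 := hy.1
    have hcast : ((Nat.factorial (n+1) : ℝ)) = (∑ a : Fin r, (y a : ℝ)) * (Nat.factorial n : ℝ) := by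
      rw [Nat.factorial_succ]
      push_cast [← hy1]
      ring
    rw [hcast]
    simp only [Finset.sum_mul, Finset.sum_div, mul_div_assoc]
  rw [Finset.sum_congr rfl hstep, Finset.sum_comm]
  apply Finset.sum_congr rfl
  intro a _
  have hzero : ∀ y ∈ piAntidiag (univ : Finset (Fin r)) (n+1),
      ((y a : ℝ) * ((Nat.factorial n : ℝ) / ∏ k, (Nat.factorial (y k) : ℝ))) * G y ≠ 0 → y a ≠ 0 := by
    intro y _ hne h0
    apply hne
    rw [h0]
    simp
  rw [← Finset.sum_filter_of_ne hzero]
  refine Finset.sum_nbij' (i := fun y => unbump a y) (j := fun y => bump a y) ?_ ?_ ?_ ?_ ?_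
  · intro y hy
    rw [Finset.mem_filter, Finset.mem_piAntidiag] at hy
    obtain ⟨⟨hsum, -⟩, hya⟩ := hy
    rw [Finset.mem_piAntidiag]
    refine ⟨?_, fun i _ => Finset.mem_univ i⟩
    show (∑ k, unbump a y k) = n
    have hsum' : ∑ k, y k = n + 1 := hsum
    have := sum_unbump a y hya
    omega
  · intro y hy
    rw [Finset.mem_piAntidiag] at hy
    rw [Finset.mem_filter, Finset.mem_piAntidiag]
    refine ⟨⟨?_, fun i _ => Finset.mem_univ i⟩, ?_⟩
    · rw [sum_bump, hy.1]
    · unfold bump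
      simp
  · intro y hy
    rw [Finset.mem_filter, Finset.mem_piAntidiag] at hy
    obtain ⟨-, hya⟩ := hy
    funext k
    unfold bump unbump
    by_cases hk : k = a
    · subst hk
      simp only [if_pos rfl, ite_self]
      simp
      omega
    · simp [hk]
  · intro y _
    funext k
    unfold bump unbump
    by_cases hk : k = a <;> simp [hk]
  · intro y hy
    rw [Finset.mem_filter, Finset.mem_piAntidiag] at hy
    obtain ⟨⟨-, -⟩, hya⟩ := hy
    have hback : bump a (unbump a y) = y := by
      funext k
      unfold bump unbump
      by_cases hk : k = a <;> simp [hk]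
      omega
    rw [hback]
    congr 1
    have e1 : (∏ k, (Nat.factorial (y k) : ℝ))
        = (∏ k ∈ univ \ {a}, (Nat.factorial (y k) : ℝ)) * (Nat.factorial (y a) : ℝ) :=
      Finset.prod_eq_prod_diff_singleton_mul (Finset.mem_univ a) _
    have e2 : (∏ k, (Nat.factorial (unbump a y k) : ℝ))
        = (∏ k ∈ univ \ {a}, (Nat.factorial (y k) : ℝ)) * (Nat.factorial (y a - 1) : ℝ) := by
      refine (Finset.prod_eq_prod_diff_singleton_mul (Finset.mem_univ a)
        (fun k => (Nat.factorial (unbump a y k) : ℝ))).trans ?_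
      congr 1
      · apply Finset.prod_congr rfl
        intro k hk
        rw [Finset.mem_sdiff, Finset.mem_singleton] at hk
        unfold unbump
        rw [if_neg hk.2]
      · unfold unbump
        rw [if_pos rfl]
    have e3 : (Nat.factorial (y a) : ℝ) = (y a : ℝ) * (Nat.factorial (y a - 1) : ℝ) := by
      have h5 : y a = (y a - 1) + 1 := by omega
      calc (Nat.factorial (y a) : ℝ) = (Nat.factorial ((y a - 1) + 1) : ℝ) := by rw [← h5]
        _ = (((y a - 1) + 1 : ℕ) : ℝ) * (Nat.factorial (y a - 1) : ℝ) := by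
              rw [Nat.factorial_succ]; push_cast; ring
        _ = (y a : ℝ) * (Nat.factorial (y a - 1) : ℝ) := by rw [← h5]
    have hP : (∏ k ∈ univ \ {a}, (Nat.factorial (y k) : ℝ)) ≠ 0 := by
      apply Finset.prod_ne_zero_iff.mpr
      intro k _
      exact_mod_cast (Nat.factorial_pos (y k)).ne'
    have hF : (Nat.factorial (y a - 1) : ℝ) ≠ 0 := by
      exact_mod_cast (Nat.factorial_pos (y a - 1)).ne'
    have hc : (y a : ℝ) ≠ 0 := by exact_mod_cast hya
    rw [e2, e1, e3]
    field_simp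


/-- count function -/
def cnt {r n : ℕ} (κ : Fin n → Fin r) : Fin r → ℕ :=
  fun k => ((univ : Finset (Fin n)).filter fun i => κ i = k).card

lemma cnt_cons {r n : ℕ} (b : Fin r) (κ : Fin n → Fin r) :
    cnt (Fin.cons b κ : Fin (n+1) → Fin r) = bump b (cnt κ) := by
  funext k
  have lhs : cnt (Fin.cons b κ : Fin (n+1) → Fin r) k = (if b = k then 1 else 0) + cnt κ k := by
    show ((univ : Finset (Fin (n+1))).filter fun i => (Fin.cons b κ : Fin (n+1) → Fin r) i = k).card
        = (if b = k then 1 else 0) + ((univ : Finset (Fin n)).filter fun i => κ i = k).card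
    rw [Finset.card_filter, Finset.card_filter, Fin.sum_univ_succ]
    simp only [Fin.cons_zero, Fin.cons_succ]
  rw [lhs]
  show _ = (if k = b then cnt κ k + 1 else cnt κ k)
  by_cases hbk : k = b
  · subst hbk
    rw [if_pos rfl, if_pos rfl]
    omega
  · rw [if_neg (fun h => hbk h.symm), if_neg hbk]
    omega

lemma CORE (r : ℕ) : ∀ (n : ℕ) (G : (Fin r → ℕ) → ℝ),
    ∑ κ : Fin n → Fin r, G (cnt κ)
      = ∑ y ∈ piAntidiag (univ : Finset (Fin r)) n,
          ((Nat.factorial n : ℝ) / ∏ k, (Nat.factorial (y k) : ℝ)) * G y := by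
  intro n
  induction n with
  | zero =>
      intro G
      rw [Finset.piAntidiag_zero, Finset.sum_singleton]
      rw [Fintype.sum_subsingleton _ (fun i : Fin 0 => i.elim0)]
      have h1 : cnt (fun i : Fin 0 => i.elim0) = (0 : Fin r → ℕ) := by
        funext k
        unfold cnt
        simp
      rw [h1]
      simp [Nat.factorial]
  | succ n ih =>
      intro G
      rw [← (Fin.consEquiv (fun _ : Fin (n+1) => Fin r)).sum_comp (fun κ => G (cnt κ)),
        Fintype.sum_prod_type]
      have h2 : ∀ b : Fin r, ∀ κ : Fin n → Fin r,
          G (cnt ((Fin.consEquiv (fun _ : Fin (n+1) => Fin r)) (b, κ))) = G (bump b (cnt κ)) := by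
        intro b κ
        rw [show (Fin.consEquiv (fun _ : Fin (n+1) => Fin r)) (b, κ) = Fin.cons b κ from rfl,
          cnt_cons]
      rw [Finset.sum_congr rfl (fun b _ => Finset.sum_congr rfl (fun κ _ => h2 b κ))]
      rw [Finset.sum_congr rfl (fun b _ => ih (fun y => G (bump b y)))]
      rw [MREC]


lemma SA (r : ℕ) (a : ℕ → ℝ) (n t : ℕ) :
    ∑ x ∈ Finset.Nat.antidiagonalTuple n t, ∏ i, p r a (x i) = A r a n t := by
  classical
  set G : (Fin r → ℕ) → ℝ := fun y =>
    (∏ k : Fin r, (a (k : ℕ) * (Nat.factorial (k : ℕ) : ℝ)) ^ (y k)) *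
      (Nat.choose (t + (∑ k : Fin r, ((k : ℕ) + 1) * y k) - 1) t : ℝ) with hG
  have hp : ∀ x : ℕ, p r a x
      = ∑ k : Fin r, a (k : ℕ) * (Nat.factorial (k : ℕ) : ℝ) * (Nat.choose (x + (k : ℕ)) x : ℝ) := by
    intro x
    rw [p, ← Fin.sum_univ_eq_sum_range (fun k => a k * (Nat.factorial k : ℝ) * (Nat.choose (x + k) x : ℝ)) r]
  have expand : ∀ x : Fin n → ℕ,
      ∏ i, p r a (x i)
        = ∑ κ : Fin n → Fin r, ∏ i,
            (a ((κ i : ℕ)) * (Nat.factorial ((κ i : ℕ)) : ℝ) * (Nat.choose (x i + (κ i : ℕ)) (x i) : ℝ)) := by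
    intro x
    rw [Finset.prod_congr rfl (fun i _ => hp (x i)),
      Finset.prod_univ_sum (fun _ : Fin n => (univ : Finset (Fin r)))
        (fun i k => a (k : ℕ) * (Nat.factorial (k : ℕ) : ℝ) * (Nat.choose (x i + (k : ℕ)) (x i) : ℝ)),
      Fintype.piFinset_univ]
  rw [Finset.sum_congr rfl (fun x _ => expand x), Finset.sum_comm]
  have perκ : ∀ κ : Fin n → Fin r,
      ∑ x ∈ Finset.Nat.antidiagonalTuple n t, ∏ i,
          (a ((κ i : ℕ)) * (Nat.factorial ((κ i : ℕ)) : ℝ) * (Nat.choose (x i + (κ i : ℕ)) (x i) : ℝ))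
        = G (cnt κ) := by
    intro κ
    have split : ∀ x : Fin n → ℕ,
        (∏ i, (a ((κ i : ℕ)) * (Nat.factorial ((κ i : ℕ)) : ℝ) * (Nat.choose (x i + (κ i : ℕ)) (x i) : ℝ)))
          = (∏ i, a ((κ i : ℕ)) * (Nat.factorial ((κ i : ℕ)) : ℝ))
            * (∏ i, (Nat.choose (x i + (κ i : ℕ)) (x i) : ℝ)) := by
      intro x
      rw [Finset.prod_mul_distrib]
    rw [Finset.sum_congr rfl (fun x _ => split x), ← Finset.mul_sum]
    have hchoose : ∑ x ∈ Finset.Nat.antidiagonalTuple n t, ∏ i, (Nat.choose (x i + (κ i : ℕ)) (x i) : ℝ)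
        = (Nat.choose (t + (∑ i, ((κ i : ℕ) + 1)) - 1) t : ℝ) := by
      rw [Finset.sum_congr rfl (fun x _ => (Nat.cast_prod _ _).symm), ← Nat.cast_sum,
        tupleV n (fun i => (κ i : ℕ)) t]
    rw [hchoose]
    -- now convert the two κ-dependent pieces to cnt κ
    have convA : (∏ i, a ((κ i : ℕ)) * (Nat.factorial ((κ i : ℕ)) : ℝ))
        = ∏ k : Fin r, (a (k : ℕ) * (Nat.factorial (k : ℕ) : ℝ)) ^ (cnt κ k) := by
      rw [← Finset.prod_fiberwise_of_maps_to (g := κ) (fun i _ => Finset.mem_univ (κ i))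
        (fun i => a ((κ i : ℕ)) * (Nat.factorial ((κ i : ℕ)) : ℝ))]
      apply Finset.prod_congr rfl
      intro k _
      have inner : ∏ i ∈ filter (fun i => κ i = k) univ, (a ((κ i : ℕ)) * (Nat.factorial ((κ i : ℕ)) : ℝ))
          = ∏ _i ∈ filter (fun i => κ i = k) univ, (a (k : ℕ) * (Nat.factorial (k : ℕ) : ℝ)) := by
        apply Finset.prod_congr rfl
        intro i hi
        rw [Finset.mem_filter] at hi
        rw [hi.2]
      rw [inner, Finset.prod_const]
      rfl
    have convB : (∑ i, ((κ i : ℕ) + 1)) = ∑ k : Fin r, ((k : ℕ) + 1) * (cnt κ k) := by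
      rw [← Finset.sum_fiberwise_of_maps_to (g := κ) (fun i _ => Finset.mem_univ (κ i))
        (fun i => ((κ i : ℕ) + 1))]
      apply Finset.sum_congr rfl
      intro k _
      have inner : ∑ i ∈ filter (fun i => κ i = k) univ, ((κ i : ℕ) + 1)
          = ∑ _i ∈ filter (fun i => κ i = k) univ, ((k : ℕ) + 1) := by
        apply Finset.sum_congr rfl
        intro i hi
        rw [Finset.mem_filter] at hi
        rw [hi.2]
      rw [inner, Finset.sum_const, smul_eq_mul, mul_comm]
      rfl
    rw [convA, convB, hG]
  rw [Finset.sum_congr rfl (fun κ _ => perκ κ), CORE r n G,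
    Finset.piAntidiag_univ_fin_eq_antidiagonalTuple n r, A]
  apply Finset.sum_congr rfl
  intro y _
  rw [hG]
  ring

end NdoppeAux

/-- Theorem 3.1: If `X₁, …, X_n` are i.i.d. with the NDOPPE PMF `f`, then
`T = X₁ + ⋯ + X_n` has PMF `f_T(t) = h(θ)^n A_n(t) (1−θ)^t`; equivalently, for every `t`,
`∑_{x₁+⋯+x_n = t} ∏_{i=1}^n f(x_i) = h(θ)^n A_n(t) (1−θ)^t`. -/
theorem ndoppe_sum_pmf (r : ℕ) (hr : 1 ≤ r) (a : ℕ → ℝ) (ha : ∀ k, 0 ≤ a k)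
    (hne : ∃ k, k < r ∧ a k ≠ 0) (θ : ℝ) (hθ : θ ∈ Set.Ioo (0 : ℝ) 1)
    (n : ℕ) (hn : 1 ≤ n) (t : ℕ) :
    ∑ x ∈ Finset.Nat.antidiagonalTuple n t,
        ∏ i, h r a θ * p r a (x i) * (1 - θ) ^ (x i) =
      h r a θ ^ n * A r a n t * (1 - θ) ^ t := by
  have hmem : ∀ x ∈ Finset.Nat.antidiagonalTuple n t, ∑ i, x i = t :=
    fun x hx => Finset.Nat.mem_antidiagonalTuple.mp hx
  have hterm : ∀ x ∈ Finset.Nat.antidiagonalTuple n t,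
      ∏ i, h r a θ * p r a (x i) * (1 - θ) ^ (x i)
        = (h r a θ ^ n * (1 - θ) ^ t) * ∏ i, p r a (x i) := by
    intro x hx
    rw [Finset.prod_mul_distrib, Finset.prod_mul_distrib, Finset.prod_const,
      Finset.prod_pow_eq_pow_sum, hmem x hx, Finset.card_univ, Fintype.card_fin]
    ring
  rw [Finset.sum_congr rfl hterm, ← Finset.mul_sum, SA r a n t]
  ring
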